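/- arXiv:math/0602110 — 2 statements merged into one kernel-verified Lean document; each statement's English description precedes it below -/
import Mathlib

section
/- Let H be a Hilbert space and let T be a bounded selfadjoint operator on H. Then T is Fredholm if and only if there exists ε > 0 such that for every continuous function φ : ℝ → ℂ with support contained in [-ε, ε], the operator φ(T) (given by the continuous functional calculus) is compact. -/
open Filter Topology

variable {H : Type*} [NormedAddCommGroup H] [InnerProductSpace ℂ H] [CompleteSpace H]

/-- `T` is Fredholm: invertible modulo compact operators. -/
def IsFredholmOp (T : H →L[ℂ] H) : Prop :=
  ∃ S : H →L[ℂ] H, IsCompactOperator ⇑(S * T - 1) ∧ IsCompactOperator ⇑(T * S - 1)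

section Aux

local notation "⟪" x ", " y "⟫" => @inner ℂ _ _ x y

lemma aux_lower_bound (T S : H →L[ℂ] H) (hK : IsCompactOperator ⇑(S * T - 1)) :
    ∃ c > (0:ℝ), ∀ x ∈ (LinearMap.ker (T : H →ₗ[ℂ] H))ᗮ, c * ‖x‖ ≤ ‖T x‖ := by
  by_contra h
  push_neg at h
  have hex : ∀ n : ℕ, ∃ u : H, u ∈ (LinearMap.ker (T : H →ₗ[ℂ] H))ᗮ ∧ ‖u‖ = 1 ∧ ‖T u‖ < 1/(n+1) := by
    intro n
    obtain ⟨x, hxmem, hx⟩ := h (1/(n+1)) (by positivity)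
    have hx0 : x ≠ 0 := by
      rintro rfl
      simp at hx
    have hxn : ‖x‖ ≠ 0 := norm_ne_zero_iff.mpr hx0
    refine ⟨((‖x‖⁻¹ : ℝ) : ℂ) • x, Submodule.smul_mem _ _ hxmem, ?_, ?_⟩
    · rw [norm_smul]
      simp [abs_of_nonneg, hxn]
    · rw [map_smul, norm_smul]
      simp only [Complex.norm_real, norm_inv, Real.norm_eq_abs, abs_abs]
      rw [abs_of_nonneg (norm_nonneg x)]
      calc ‖x‖⁻¹ * ‖T x‖ < ‖x‖⁻¹ * (1/(n+1) * ‖x‖) := by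
            exact mul_lt_mul_of_pos_left hx (by positivity)
        _ = 1/(n+1) := by field_simp
  choose u humem hunorm huT using hex
  obtain ⟨C, hCcomp, hCsub⟩ := hK.image_closedBall_subset_compact 1
  have hmem : ∀ n, (S * T - 1) (u n) ∈ C := fun n =>
    hCsub ⟨u n, by simp [Metric.mem_closedBall, hunorm], rfl⟩
  obtain ⟨y, -, φ, hφmono, hφlim⟩ := hCcomp.tendsto_subseq hmem
  have hTu : Tendsto (fun n => T (u n)) atTop (𝓝 0) := by
    apply squeeze_zero_norm (fun n => (huT n).le)
    exact tendsto_one_div_add_atTop_nhds_zero_nat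
  have hTuφ : Tendsto (fun k => T (u (φ k))) atTop (𝓝 0) := hTu.comp hφmono.tendsto_atTop
  have hSTu : Tendsto (fun k => S (T (u (φ k)))) atTop (𝓝 0) := by
    have := (S.continuous.tendsto 0).comp hTuφ
    simpa [Function.comp_def] using this
  have hulim : Tendsto (fun k => u (φ k)) atTop (𝓝 (0 - y)) := by
    have : (fun k => u (φ k)) = fun k => S (T (u (φ k))) - (S * T - 1) (u (φ k)) := by
      funext k
      simp [ContinuousLinearMap.sub_apply]
    rw [this]
    exact hSTu.sub hφlim
  have hynorm : ‖(0:H) - y‖ = 1 := by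
    have h1 : Tendsto (fun k => ‖u (φ k)‖) atTop (𝓝 ‖(0:H) - y‖) :=
      (continuous_norm.tendsto _).comp hulim
    have h2 : Tendsto (fun k => ‖u (φ k)‖) atTop (𝓝 1) := by
      simp only [hunorm]
      exact tendsto_const_nhds
    exact tendsto_nhds_unique h1 h2
  have hymem : (0:H) - y ∈ (LinearMap.ker (T : H →ₗ[ℂ] H))ᗮ := by
    have hcl : IsClosed ((LinearMap.ker (T : H →ₗ[ℂ] H))ᗮ : Set H) := Submodule.isClosed_orthogonal _
    exact hcl.mem_of_tendsto hulim (Eventually.of_forall fun k => humem (φ k))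
  have hTy : T ((0:H) - y) = 0 := by
    have h1 : Tendsto (fun k => T (u (φ k))) atTop (𝓝 (T ((0:H) - y))) :=
      (T.continuous.tendsto _).comp hulim
    exact tendsto_nhds_unique h1 hTuφ
  have hzero : (0:H) - y = 0 := by
    have h1 : (0:H) - y ∈ LinearMap.ker (T : H →ₗ[ℂ] H) := LinearMap.mem_ker.mpr hTy
    have h2 := (Submodule.mem_orthogonal _ _).mp hymem _ h1
    rwa [inner_self_eq_zero] at h2
  rw [hzero] at hynorm
  simp at hynorm

lemma aux_spec_gap (T : H →L[ℂ] H) (hT : IsSelfAdjoint T) {c : ℝ} (hc : 0 < c)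
    (hbound : ∀ x ∈ (LinearMap.ker (T : H →ₗ[ℂ] H))ᗮ, c * ‖x‖ ≤ ‖T x‖) {lam : ℝ}
    (h0 : lam ≠ 0) (hlt : |lam| < c) : (lam : ℂ) ∉ spectrum ℂ T := by
  set N := LinearMap.ker (T : H →ₗ[ℂ] H) with hN
  haveI : CompleteSpace N := (ContinuousLinearMap.isClosed_ker T).completeSpace_coe
  set A : H →L[ℂ] H := algebraMap ℂ (H →L[ℂ] H) (lam : ℂ) - T with hA
  set m : ℝ := min |lam| (c - |lam|) with hm
  have hmpos : 0 < m := lt_min (abs_pos.mpr h0) (by linarith)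
  -- T maps Nᗮ into Nᗮ
  have hTorth : ∀ v : H, T v ∈ Nᗮ → True := fun _ _ => trivial
  have key : ∀ x : H, m * ‖x‖ ≤ ‖A x‖ := by
    intro x
    set u : H := (N.orthogonalProjectionOnto x : H) with hu
    set v : H := x - u with hv
    have humem : u ∈ N := Submodule.coe_mem _
    have hvmem : v ∈ Nᗮ := by have := N.sub_starProjection_mem_orthogonal x; rwa [Submodule.starProjection_apply] at this
    have hTu : T u = 0 := humem
    have hTv : T v ∈ Nᗮ := by
      rw [Submodule.mem_orthogonal]
      intro w hw
      have : ⟪T w, v⟫ = ⟪w, T v⟫ := by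
        rw [← ContinuousLinearMap.adjoint_inner_left, ← ContinuousLinearMap.star_eq_adjoint,
          hT.star_eq]
      rw [← this, show T w = 0 from LinearMap.mem_ker.mp hw, inner_zero_left]
    have hxuv : x = u + v := by rw [hv, add_sub_cancel]
    have hAx : A x = (lam : ℂ) • u + ((lam : ℂ) • v - T v) := by
      rw [hA]
      simp only [ContinuousLinearMap.sub_apply, Algebra.algebraMap_eq_smul_one,
        ContinuousLinearMap.smul_apply, ContinuousLinearMap.one_apply]
      rw [hxuv, map_add, smul_add, hTu]
      abel
    have horth : ⟪(lam : ℂ) • u, (lam : ℂ) • v - T v⟫ = 0 := by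
      have hw : (lam : ℂ) • v - T v ∈ Nᗮ := Submodule.sub_mem _ (Submodule.smul_mem _ _ hvmem) hTv
      exact (Submodule.mem_orthogonal _ _).mp hw _ (Submodule.smul_mem _ _ humem)
    have hnormsq : ‖A x‖ ^ 2 = ‖(lam : ℂ) • u‖ ^ 2 + ‖(lam : ℂ) • v - T v‖ ^ 2 := by
      rw [hAx, pow_two, pow_two, pow_two]
      exact norm_add_sq_eq_norm_sq_add_norm_sq_of_inner_eq_zero _ _ horth
    have hxsq : ‖x‖ ^ 2 = ‖u‖ ^ 2 + ‖v‖ ^ 2 := by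
      rw [hxuv, pow_two, pow_two, pow_two]
      exact norm_add_sq_eq_norm_sq_add_norm_sq_of_inner_eq_zero _ _
        ((Submodule.mem_orthogonal _ _).mp hvmem _ humem)
    have h1 : ‖(lam : ℂ) • u‖ = |lam| * ‖u‖ := by
      rw [norm_smul]; simp
    have h2 : c * ‖v‖ - |lam| * ‖v‖ ≤ ‖(lam : ℂ) • v - T v‖ := by
      have := hbound v hvmem
      calc c * ‖v‖ - |lam| * ‖v‖ ≤ ‖T v‖ - ‖(lam : ℂ) • v‖ := by
            rw [norm_smul]; simp only [Complex.norm_real, Real.norm_eq_abs]; linarith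
        _ ≤ ‖T v - (lam : ℂ) • v‖ := norm_sub_norm_le _ _
        _ = ‖(lam : ℂ) • v - T v‖ := norm_sub_rev _ _
    have h3 : m * ‖u‖ ≤ ‖(lam : ℂ) • u‖ := by
      rw [h1]
      exact mul_le_mul_of_nonneg_right (min_le_left _ _) (norm_nonneg _)
    have h4 : m * ‖v‖ ≤ ‖(lam : ℂ) • v - T v‖ := by
      refine le_trans ?_ h2
      have : m ≤ c - |lam| := min_le_right _ _
      nlinarith [norm_nonneg v]
    have h3' : (m * ‖u‖) ^ 2 ≤ ‖(lam:ℂ) • u‖ ^ 2 := pow_le_pow_left₀ (by positivity) h3 2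
    have h4' : (m * ‖v‖) ^ 2 ≤ ‖(lam:ℂ) • v - T v‖ ^ 2 := pow_le_pow_left₀ (by positivity) h4 2
    have hsq : (m * ‖x‖) ^ 2 ≤ ‖A x‖ ^ 2 := by
      rw [hnormsq, mul_pow, hxsq]
      nlinarith [h3', h4']
    exact le_of_pow_le_pow_left₀ two_ne_zero (norm_nonneg _) hsq
  -- A is injective, antilipschitz, selfadjoint; conclude invertible
  have hinj : Function.Injective A := by
    intro a b hab
    have h1 := key (a - b)
    rw [map_sub, hab, sub_self, norm_zero] at h1
    have : ‖a - b‖ ≤ 0 := by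
      by_contra hcon
      push_neg at hcon
      nlinarith
    rw [← sub_eq_zero]
    exact norm_le_zero_iff.mp this
  have hanti : AntilipschitzWith (⟨m, hmpos.le⟩ : NNReal)⁻¹ ⇑A :=
    ContinuousLinearMap.antilipschitz_of_bound A (fun x => by
      refine le_trans ?_ (le_of_eq (congrArg (· * ‖A x‖) (NNReal.coe_inv (⟨m, hmpos.le⟩ : NNReal)).symm))
      exact (le_inv_mul_iff₀ (by exact_mod_cast hmpos)).mpr (key x))
  have hAsa : IsSelfAdjoint A := by
    rw [hA]
    refine IsSelfAdjoint.sub ?_ hT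
    have h1 : IsSelfAdjoint ((lam : ℂ)) := by
      rw [IsSelfAdjoint, Complex.star_def, Complex.conj_ofReal]
    exact h1.algebraMap _
  have hclosedrange : IsClosed (Set.range ⇑A) := hanti.isClosed_range A.uniformContinuous
  have hrange : LinearMap.range (A : H →ₗ[ℂ] H) = ⊤ := by
    have hcl : IsClosed ((LinearMap.range (A : H →ₗ[ℂ] H) : Submodule ℂ H) : Set H) := by
      rwa [LinearMap.coe_range]
    haveI : CompleteSpace (LinearMap.range (A : H →ₗ[ℂ] H)) := hcl.completeSpace_coe
    rw [← Submodule.orthogonal_eq_bot_iff]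
    rw [Submodule.eq_bot_iff]
    intro y hy
    have hAy : A y = 0 := by
      have h1 := (Submodule.mem_orthogonal _ _).mp hy (A (A y)) (LinearMap.mem_range_self _ _)
      have h2 : ⟪A y, A y⟫ = 0 := by
        rw [← ContinuousLinearMap.adjoint_inner_left A y (A y),
          ← ContinuousLinearMap.star_eq_adjoint, hAsa.star_eq]
        exact h1
      exact inner_self_eq_zero.mp h2
    exact hinj (by rw [hAy, map_zero] : A y = A 0)
  have hbij : Function.Bijective ⇑A := ⟨hinj, LinearMap.range_eq_top.mp (by exact_mod_cast hrange)⟩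
  have hunit : IsUnit A := ContinuousLinearMap.isUnit_iff_bijective.mpr hbij
  rw [spectrum.notMem_iff, ← hA]
  exact hunit

lemma aux_gap_of_fredholm (T : H →L[ℂ] H) (hT : IsSelfAdjoint T) (S : H →L[ℂ] H)
    (hST : IsCompactOperator ⇑(S * T - 1)) :
    ∃ c > (0:ℝ), ∀ z ∈ spectrum ℂ T, z ≠ 0 → c ≤ |z.re| := by
  obtain ⟨c, hc, hbound⟩ := aux_lower_bound T S hST
  refine ⟨c, hc, fun z hz hz0 => ?_⟩
  have hzre : z = (z.re : ℂ) := hT.mem_spectrum_eq_re hz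
  have hre0 : z.re ≠ 0 := by
    intro h
    rw [h] at hzre
    exact hz0 (by simpa using hzre)
  by_contra habs
  push_neg at habs
  exact aux_spec_gap T hT hc hbound hre0 habs (hzre ▸ hz)

lemma aux_forward (T : H →L[ℂ] H) (hT : IsSelfAdjoint T) {c : ℝ} (hc : 0 < c)
    (hgap : ∀ z ∈ spectrum ℂ T, z ≠ 0 → c ≤ |z.re|)
    (S : H →L[ℂ] H) (hST : IsCompactOperator ⇑(S * T - 1))
    (φ : ℝ → ℂ) (hφc : Continuous φ) (hφs : Function.support φ ⊆ Set.Icc (-(c/2)) (c/2)) :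
    IsCompactOperator ⇑(cfc (fun z : ℂ => φ z.re) T) := by
  haveI : IsStarNormal T := hT.isStarNormal
  set f : ℂ → ℂ := fun z => φ z.re with hf
  have hfc : Continuous f := hφc.comp Complex.continuous_re
  have hmul : T * cfc f T = 0 := by
    have hstep : T * cfc f T = cfc (fun z : ℂ => z * f z) T := by
      rw [cfc_mul (fun z : ℂ => z) f T continuousOn_id hfc.continuousOn, cfc_id' ℂ T]
    rw [hstep]
    have heq : (spectrum ℂ T).EqOn (fun z => z * f z) 0 := by
      intro z hz
      have hz' : z = z.re := hT.mem_spectrum_eq_re hz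
      by_cases h0 : z = 0
      · simp [h0]
      · have hre : φ z.re = 0 := by
          by_contra hne
          have hmem := hφs hne
          have h1 : c ≤ |z.re| := hgap z hz h0
          rw [Set.mem_Icc] at hmem
          have : |z.re| ≤ c/2 := abs_le.mpr ⟨hmem.1, hmem.2⟩
          linarith
        simp [hf, hre]
    rw [cfc_congr heq, cfc_zero]
  have hrepr : cfc f T = -((S * T - 1) * cfc f T) := by
    have h1 : (S * T - 1) * cfc f T = S * (T * cfc f T) - cfc f T := by
      rw [sub_mul, one_mul, mul_assoc]
    rw [h1, hmul, mul_zero, zero_sub, neg_neg]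
  rw [hrepr]
  have h2 : IsCompactOperator ⇑((S * T - 1) * cfc f T) := by
    have : ⇑((S * T - 1) * cfc f T) = ⇑(S * T - 1) ∘ ⇑(cfc f T) := rfl
    rw [this]
    exact hST.comp_clm (cfc f T)
  have : ⇑(-((S * T - 1) * cfc f T)) = -(⇑((S * T - 1) * cfc f T)) := rfl
  rw [this]
  exact h2.neg

lemma aux_backward (T : H →L[ℂ] H) (hT : IsSelfAdjoint T) {ε : ℝ} (hε : 0 < ε)
    (hcomp : ∀ φ : ℝ → ℂ, Continuous φ → Function.support φ ⊆ Set.Icc (-ε) ε →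
      IsCompactOperator ⇑(cfc (fun z : ℂ => φ z.re) T)) : IsFredholmOp T := by
  haveI : IsStarNormal T := hT.isStarNormal
  set φ₀ : ℝ → ℝ := fun x => max 0 (min 1 (2 - 2 * |x| / ε)) with hφ₀
  have hφ₀cont : Continuous φ₀ := by fun_prop
  set φ : ℝ → ℂ := fun x => ((φ₀ x : ℝ) : ℂ) with hφ
  have hφcont : Continuous φ := by fun_prop
  have hφsupp : Function.support φ ⊆ Set.Icc (-ε) ε := by
    intro x hx
    rw [Function.mem_support] at hx
    have h1 : φ₀ x ≠ 0 := fun h => hx (by simp [hφ, h])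
    have h2 : 0 < min 1 (2 - 2 * |x| / ε) := by
      rcases lt_or_ge 0 (min 1 (2 - 2 * |x| / ε)) with h | h
      · exact h
      · exact absurd (max_eq_left h) h1
    have h3 : 0 < 2 - 2 * |x| / ε := lt_of_lt_of_le h2 (min_le_right _ _)
    have h4 : |x| < ε := by
      rw [sub_pos, div_lt_iff₀ hε] at h3
      nlinarith
    rw [Set.mem_Icc]
    exact abs_le.mp h4.le
  have hφ₀one : ∀ x : ℝ, |x| ≤ ε/2 → φ₀ x = 1 := by
    intro x hx
    have h0 : 2 * |x| / ε ≤ 1 := by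
      rw [div_le_one hε]
      nlinarith [abs_nonneg x]
    have h1 : (1:ℝ) ≤ 2 - 2 * |x| / ε := by linarith
    simp only [hφ₀]
    rw [min_eq_left h1, max_eq_right zero_le_one]
  set ψ : ℝ → ℂ := fun x => (1 - φ x) / (x : ℂ) with hψ
  have hψ0 : ∀ x : ℝ, |x| ≤ ε/2 → ψ x = 0 := by
    intro x hx
    simp only [hψ, hφ]
    rw [hφ₀one x hx]
    simp
  have hψcont : Continuous ψ := by
    rw [continuous_iff_continuousAt]
    intro x
    by_cases hx : x = 0
    · subst hx
      have hev : (fun _ => (0:ℂ)) =ᶠ[nhds (0:ℝ)] ψ := by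
        filter_upwards [Metric.ball_mem_nhds (0:ℝ) (by positivity : 0 < ε/2)] with y hy
        rw [Metric.mem_ball, Real.dist_eq, sub_zero] at hy
        exact (hψ0 y hy.le).symm
      exact continuousAt_const.congr hev
    · apply ContinuousAt.div
      · fun_prop
      · fun_prop
      · exact_mod_cast Complex.ofReal_ne_zero.mpr hx
  set g : ℂ → ℂ := fun z => ψ z.re with hg
  have hgcont : Continuous g := hψcont.comp Complex.continuous_re
  set S : H →L[ℂ] H := cfc g T with hS
  have habs0 : |(0:ℝ)| ≤ ε/2 := by simp; positivity
  have hkey : ∀ z ∈ spectrum ℂ T, g z * z - 1 = -φ z.re := by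
    intro z hz
    obtain ⟨x, rfl⟩ : ∃ x : ℝ, z = (x:ℂ) :=
      ⟨z.re, by exact_mod_cast hT.mem_spectrum_eq_re hz⟩
    simp only [hg, Complex.ofReal_re]
    by_cases h0 : x = 0
    · subst h0
      rw [hψ0 0 habs0]
      simp only [hφ]
      rw [hφ₀one 0 habs0]
      simp
    · simp only [hψ]
      rw [div_mul_cancel₀ _ (Complex.ofReal_ne_zero.mpr h0)]
      ring
  have hA : ContinuousOn (fun z : ℂ => g z * z) (spectrum ℂ T) :=
    (hgcont.mul continuous_id).continuousOn
  have hB : ContinuousOn (fun z : ℂ => z * g z) (spectrum ℂ T) :=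
    (continuous_id.mul hgcont).continuousOn
  have hre : Continuous (fun z : ℂ => φ z.re) := hφcont.comp Complex.continuous_re
  have hmulST : S * T = cfc (fun z : ℂ => g z * z) T := by
    rw [hS]
    nth_rewrite 2 [← cfc_id' ℂ T]
    rw [← cfc_mul g (fun x => x) T hgcont.continuousOn continuous_id.continuousOn]
  have hmulTS : T * S = cfc (fun z : ℂ => z * g z) T := by
    rw [hS]
    nth_rewrite 1 [← cfc_id' ℂ T]
    rw [← cfc_mul (fun x => x) g T continuous_id.continuousOn hgcont.continuousOn]
  have hST : S * T - 1 = -cfc (fun z : ℂ => φ z.re) T := by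
    rw [hmulST, ← cfc_one ℂ T, ← cfc_sub (fun z : ℂ => g z * z) (1 : ℂ → ℂ) T hA continuousOn_const,
      ← cfc_neg (fun z : ℂ => φ z.re) T]
    apply cfc_congr
    intro z hz
    simpa using hkey z hz
  have hTS : T * S - 1 = -cfc (fun z : ℂ => φ z.re) T := by
    rw [hmulTS, ← cfc_one ℂ T, ← cfc_sub (fun z : ℂ => z * g z) (1 : ℂ → ℂ) T hB continuousOn_const,
      ← cfc_neg (fun z : ℂ => φ z.re) T]
    apply cfc_congr
    intro z hz
    have := hkey z hz
    rw [mul_comm] at this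
    simpa using this
  have hc := hcomp φ hφcont hφsupp
  have hcoe : ⇑(-cfc (fun z : ℂ => φ z.re) T) = -⇑(cfc (fun z : ℂ => φ z.re) T) := rfl
  exact ⟨S, by rw [hST, hcoe]; exact hc.neg, by rw [hTS, hcoe]; exact hc.neg⟩

end Aux

theorem fredholm_iff_cfc_compact (T : H →L[ℂ] H) (hT : IsSelfAdjoint T) :
    IsFredholmOp T ↔
      ∃ ε > (0 : ℝ), ∀ φ : ℝ → ℂ, Continuous φ →
        Function.support φ ⊆ Set.Icc (-ε) ε →
        IsCompactOperator ⇑(cfc (fun z : ℂ => φ z.re) T) := by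
  constructor
  · rintro ⟨S, hST, hTS⟩
    obtain ⟨c, hc, hgap⟩ := aux_gap_of_fredholm T hT S hST
    exact ⟨c/2, by positivity, fun φ hφc hφs => aux_forward T hT hc hgap S hST φ hφc hφs⟩
  · rintro ⟨ε, hε, hcomp⟩
    exact aux_backward T hT hε hcomp
end

section
/- Let P and Q be orthogonal projections on a Hilbert space H with P − Q compact. Then the operator QP, viewed as an operator from the range of P to the range of Q, is Fredholm, and PQ (viewed from the range of Q to the range of P) is a parametrix for it: QP ∘ PQ − id_{ran Q} and PQ ∘ QP − id_{ran P} are compact. -/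
open Filter Topology

section Aux

lemma auxKerFindim {E F : Type*} [NormedAddCommGroup E] [NormedAddCommGroup F]
    [NormedSpace ℂ E] [NormedSpace ℂ F] (T : E →L[ℂ] F) (S : F →L[ℂ] E)
    (h : IsCompactOperator ⇑(S.comp T - 1)) :
    FiniteDimensional ℂ (LinearMap.ker T.toLinearMap) := by
  set K := S.comp T - 1 with hKdef
  have hinv : ∀ x ∈ LinearMap.ker T.toLinearMap, K x ∈ LinearMap.ker T.toLinearMap := by
    intro x hx
    have hx' : T x = 0 := hx
    have : K x = -x := by
      simp [hKdef, hx']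
    rw [this]
    exact neg_mem hx
  have hclosed : IsClosed (LinearMap.ker T.toLinearMap : Set E) := ContinuousLinearMap.isClosed_ker T
  have h2 : IsCompactOperator ((K : E →ₗ[ℂ] E).restrict hinv) := h.restrict hinv hclosed
  have h3 : IsCompactOperator (fun x : LinearMap.ker T.toLinearMap => -x) := by
    have : ((K : E →ₗ[ℂ] E).restrict hinv : LinearMap.ker T.toLinearMap → LinearMap.ker T.toLinearMap)
        = fun x => -x := by
      funext x
      apply Subtype.ext
      have hx' : T (x : E) = 0 := x.2
      simp [LinearMap.restrict_apply, hKdef, hx']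
    rwa [this] at h2
  have h4 : IsCompactOperator (fun x : LinearMap.ker T.toLinearMap => x) := by
    have h5 := h3.neg
    have : (-fun x : LinearMap.ker T.toLinearMap => -x) = fun x : LinearMap.ker T.toLinearMap => x := by
      funext x; simp
    rwa [this] at h5
  obtain ⟨C, hC, hC'⟩ := h4
  rw [Metric.mem_nhds_iff] at hC'
  obtain ⟨ε, hε, hball⟩ := hC'
  refine FiniteDimensional.of_isCompact_closedBall₀ ℂ (r := ε / 2) (by linarith) ?_
  refine hC.of_isClosed_subset Metric.isClosed_closedBall ?_
  intro x hx
  have : x ∈ Metric.ball (0 : LinearMap.ker T.toLinearMap) ε := by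
    rw [Metric.mem_closedBall] at hx
    rw [Metric.mem_ball]
    linarith
  exact hball this

lemma auxRangeClosed {E F : Type*} [NormedAddCommGroup E] [NormedAddCommGroup F]
    [InnerProductSpace ℂ E] [InnerProductSpace ℂ F] [CompleteSpace E]
    (T : E →L[ℂ] F) (S : F →L[ℂ] E)
    (h : IsCompactOperator ⇑(S.comp T - 1)) :
    IsClosed (LinearMap.range T.toLinearMap : Set F) := by
  haveI : FiniteDimensional ℂ (LinearMap.ker T.toLinearMap) := auxKerFindim T S h
  set N := LinearMap.ker T.toLinearMap with hN
  set M := Nᗮ with hM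
  set K : E →L[ℂ] E := S.comp T - 1 with hK
  have hbdd : ∃ c : ℝ, 0 < c ∧ ∀ x ∈ M, c * ‖x‖ ≤ ‖T x‖ := by
    by_contra hcon
    push_neg at hcon
    have hseq : ∀ n : ℕ, ∃ u : E, u ∈ M ∧ ‖u‖ = 1 ∧ ‖T u‖ < 1 / (n + 1) := by
      intro n
      obtain ⟨x, hxM, hx⟩ := hcon (1 / (n + 1)) (by positivity)
      have hx0 : x ≠ 0 := by
        rintro rfl
        simp at hx
      have hxn : ‖x‖ ≠ 0 := norm_ne_zero_iff.mpr hx0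
      refine ⟨((‖x‖ : ℂ))⁻¹ • x, M.smul_mem _ hxM, ?_, ?_⟩
      · rw [norm_smul]
        simp [hxn]
      · rw [map_smul, norm_smul]
        simp only [norm_inv, Complex.norm_real, norm_norm]
        calc ‖x‖⁻¹ * ‖T x‖ < ‖x‖⁻¹ * (1 / (n+1) * ‖x‖) := by
              apply mul_lt_mul_of_pos_left hx
              positivity
          _ = 1 / (n+1) := by
              field_simp
    choose u huM hu1 huT using hseq
    have h' : IsCompactOperator ⇑(K : E →ₗ[ℂ] E) := by
      rwa [ContinuousLinearMap.coe_coe]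
    obtain ⟨C, hC, hsub⟩ := h'.image_closedBall_subset_compact (𝕜₁ := ℂ) 1
    have hmem : ∀ n, K (u n) ∈ C := by
      intro n
      apply hsub
      exact ⟨u n, by simp [Metric.mem_closedBall, hu1 n], rfl⟩
    obtain ⟨y, hy, φ, hφ, hconv⟩ := hC.tendsto_subseq hmem
    have hTu : Tendsto (fun n => T (u n)) atTop (𝓝 0) := by
      apply squeeze_zero_norm (fun n => (huT n).le)
      exact tendsto_one_div_add_atTop_nhds_zero_nat
    have hTuφ : Tendsto (fun n => T (u (φ n))) atTop (𝓝 0) :=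
      hTu.comp hφ.tendsto_atTop
    have hSTuφ : Tendsto (fun n => S (T (u (φ n)))) atTop (𝓝 0) := by
      have := (S.continuous.tendsto 0).comp hTuφ
      rw [map_zero] at this
      exact this
    have huφ : Tendsto (fun n => u (φ n)) atTop (𝓝 (-y)) := by
      have heq : ∀ n, u (φ n) = S (T (u (φ n))) - K (u (φ n)) := by
        intro n
        simp [hK]
      rw [show (fun n => u (φ n)) = fun n => S (T (u (φ n))) - K (u (φ n)) from funext heq]
      have := hSTuφ.sub hconv
      simpa using this
    have hny : ‖(-y : E)‖ = 1 := by
      have h1 : Tendsto (fun n => ‖u (φ n)‖) atTop (𝓝 ‖(-y : E)‖) :=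
        (continuous_norm.tendsto _).comp huφ
      have h2 : Tendsto (fun n => ‖u (φ n)‖) atTop (𝓝 1) := by
        simpa [hu1] using tendsto_const_nhds (α := ℝ) (x := (1:ℝ))
      exact tendsto_nhds_unique h1 h2
    have hyM : (-y : E) ∈ M := by
      have hMc : IsClosed (M : Set E) := N.isClosed_orthogonal
      exact hMc.mem_of_tendsto huφ (Eventually.of_forall fun n => huM (φ n))
    have hyN : (-y : E) ∈ N := by
      have h1 : Tendsto (fun n => T (u (φ n))) atTop (𝓝 (T (-y))) :=
        (T.continuous.tendsto _).comp huφ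
      have : T (-y) = 0 := tendsto_nhds_unique h1 hTuφ
      exact this
    have : (-y : E) = 0 := by
      have hmem2 : (-y : E) ∈ N ⊓ Nᗮ := ⟨hyN, hyM⟩
      rwa [N.orthogonal_disjoint.eq_bot, Submodule.mem_bot] at hmem2
    rw [this] at hny
    simp at hny
  obtain ⟨c, hc, hcb⟩ := hbdd
  haveI : CompleteSpace N := FiniteDimensional.complete ℂ N
  have hsup : N ⊔ Nᗮ = ⊤ := Submodule.sup_orthogonal_of_hasOrthogonalProjection
  have hrange : LinearMap.range (T.comp M.subtypeL).toLinearMap = LinearMap.range T.toLinearMap := by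
    apply le_antisymm
    · rintro _ ⟨x, rfl⟩
      exact ⟨x, rfl⟩
    · rintro _ ⟨x, rfl⟩
      have hx : x ∈ N ⊔ Nᗮ := by rw [hsup]; trivial
      obtain ⟨v, hv, z, hz, rfl⟩ := Submodule.mem_sup.mp hx
      refine ⟨⟨z, hz⟩, ?_⟩
      have hv0 : T v = 0 := hv
      simp [hv0]
  have hanti : AntilipschitzWith (⟨c, hc.le⟩ : NNReal)⁻¹ ⇑(T.comp M.subtypeL) := by
    apply ContinuousLinearMap.antilipschitz_of_bound
    intro x
    have h1 : c * ‖(x : E)‖ ≤ ‖T (x : E)‖ := hcb x x.2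
    have h2 : ‖x‖ = ‖(x : E)‖ := rfl
    rw [h2]
    show ‖(x : E)‖ ≤ c⁻¹ * ‖(T.comp M.subtypeL) x‖
    rw [inv_mul_eq_div, le_div_iff₀ hc]
    calc ‖(x : E)‖ * c = c * ‖(x : E)‖ := mul_comm _ _
      _ ≤ ‖T (x : E)‖ := h1
      _ = ‖(T.comp M.subtypeL) x‖ := rfl
  have hcl : IsClosed (Set.range ⇑(T.comp M.subtypeL)) :=
    hanti.isClosed_range (T.comp M.subtypeL).uniformContinuous
  have heq : (LinearMap.range T.toLinearMap : Set F) = Set.range ⇑(T.comp M.subtypeL) := by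
    rw [← hrange]
    exact (LinearMap.coe_range _).symm
  rw [heq]
  exact hcl

lemma auxCokerFindim {F : Type*} [NormedAddCommGroup F] [InnerProductSpace ℂ F]
    [CompleteSpace F] (U : Submodule ℂ F) (hclosed : IsClosed (U : Set F))
    [FiniteDimensional ℂ Uᗮ] : FiniteDimensional ℂ (F ⧸ U) := by
  haveI : CompleteSpace U := hclosed.completeSpace_coe
  have hsup : U ⊔ Uᗮ = ⊤ := Submodule.sup_orthogonal_of_hasOrthogonalProjection
  apply FiniteDimensional.of_surjective (U.mkQ.comp Uᗮ.subtype)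
  intro z
  obtain ⟨y, rfl⟩ := U.mkQ_surjective z
  have hy : y ∈ U ⊔ Uᗮ := by rw [hsup]; trivial
  obtain ⟨v, hv, w, hw, rfl⟩ := Submodule.mem_sup.mp hy
  refine ⟨⟨w, hw⟩, ?_⟩
  simp [Submodule.Quotient.mk_add, (Submodule.Quotient.mk_eq_zero U).mpr hv]

end Aux

variable {H : Type*} [NormedAddCommGroup H] [InnerProductSpace ℂ H] [CompleteSpace H]

/-- An orthogonal projection: a selfadjoint idempotent. -/
def IsOrthProj (P : H →L[ℂ] H) : Prop := IsIdempotentElem P ∧ IsSelfAdjoint P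

/-- The operator `Q ∘ P` viewed as a map from the range of `P` to the range of `Q`. -/
noncomputable def compressedOp (P Q : H →L[ℂ] H) :
    (LinearMap.range (P : H →ₗ[ℂ] H)) →L[ℂ] (LinearMap.range (Q : H →ₗ[ℂ] H)) :=
  (Q.comp (LinearMap.range (P : H →ₗ[ℂ] H)).subtypeL).codRestrict (LinearMap.range (Q : H →ₗ[ℂ] H))
    (fun x => LinearMap.mem_range_self _ _)

/-- Fredholmness of an operator between (possibly different) spaces. -/
def IsFredholm {E F : Type*} [NormedAddCommGroup E] [NormedAddCommGroup F]
    [NormedSpace ℂ E] [NormedSpace ℂ F] (T : E →L[ℂ] F) : Prop :=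
  FiniteDimensional ℂ (LinearMap.ker (T : E →ₗ[ℂ] F)) ∧ IsClosed (LinearMap.range (T : E →ₗ[ℂ] F) : Set F) ∧
    FiniteDimensional ℂ (F ⧸ LinearMap.range (T : E →ₗ[ℂ] F))

section Main

variable (P Q : H →L[ℂ] H)

lemma isClosed_range_of_idem (hP : IsIdempotentElem P) :
    IsClosed ((LinearMap.range (P : H →ₗ[ℂ] H) : Submodule ℂ H) : Set H) := by
  have hmem : ∀ x : H, x ∈ LinearMap.range (P : H →ₗ[ℂ] H) ↔ P x = x := by
    intro x
    constructor
    · rintro ⟨y, rfl⟩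
      have := ContinuousLinearMap.ext_iff.mp hP y
      simpa [ContinuousLinearMap.mul_apply] using this
    · intro hx
      exact ⟨x, hx⟩
  have : ((LinearMap.range (P : H →ₗ[ℂ] H) : Submodule ℂ H) : Set H) = {x | P x = x} := by
    ext x; exact hmem x
  rw [this]
  exact isClosed_eq P.continuous continuous_id

lemma compressedOp_apply (x : LinearMap.range (P : H →ₗ[ℂ] H)) :
    ((compressedOp P Q) x : H) = Q (x : H) := rfl

lemma isCompact_parametrix (hP : IsOrthProj P) (hQ : IsOrthProj Q)
    (hPQ : IsCompactOperator ⇑(P - Q)) :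
    IsCompactOperator ⇑((compressedOp Q P).comp (compressedOp P Q) - 1) := by
  have hPc := isClosed_range_of_idem P hP.1
  have hQP : IsCompactOperator ⇑(Q - P) := by
    have h2 : ⇑(Q - P) = -⇑(P - Q) := by
      funext x; simp
    rw [h2]
    exact hPQ.neg
  have hg : IsCompactOperator (⇑P ∘ ⇑(Q - P)) := hQP.clm_comp P
  have hg2 : IsCompactOperator ((⇑P ∘ ⇑(Q - P)) ∘ ⇑(LinearMap.range (P : H →ₗ[ℂ] H)).subtypeL) :=
    hg.comp_clm (LinearMap.range (P : H →ₗ[ℂ] H)).subtypeL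
  have hV : ∀ x : LinearMap.range (P : H →ₗ[ℂ] H),
      ((⇑P ∘ ⇑(Q - P)) ∘ ⇑(LinearMap.range (P : H →ₗ[ℂ] H)).subtypeL) x ∈ LinearMap.range (P : H →ₗ[ℂ] H) :=
    fun x => LinearMap.mem_range_self _ _
  have hg3 := hg2.codRestrict hV hPc
  have heq : ⇑((compressedOp Q P).comp (compressedOp P Q) - 1)
      = Set.codRestrict ((⇑P ∘ ⇑(Q - P)) ∘ ⇑(LinearMap.range (P : H →ₗ[ℂ] H)).subtypeL)
        (LinearMap.range (P : H →ₗ[ℂ] H)) hV := by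
    funext x
    apply Subtype.ext
    have hx : P (x : H) = (x : H) := by
      obtain ⟨y, hy⟩ := x.2
      rw [← hy]
      have := ContinuousLinearMap.ext_iff.mp hP.1 y
      simpa [ContinuousLinearMap.mul_apply] using this
    show (P ((compressedOp P Q) x : H)) - (x : H) = P ((Q - P) (x : H))
    rw [compressedOp_apply]
    simp only [ContinuousLinearMap.sub_apply, map_sub, hx]
  rw [heq]
  exact hg3

end Main

theorem compressedOp_fredholm_with_parametrix (P Q : H →L[ℂ] H)
    (hP : IsOrthProj P) (hQ : IsOrthProj Q) (hPQ : IsCompactOperator ⇑(P - Q)) :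
    IsFredholm (compressedOp P Q) ∧
      IsCompactOperator ⇑((compressedOp P Q).comp (compressedOp Q P) - 1) ∧
      IsCompactOperator ⇑((compressedOp Q P).comp (compressedOp P Q) - 1) := by
  have hQP : IsCompactOperator ⇑(Q - P) := by
    have h2 : ⇑(Q - P) = -⇑(P - Q) := by funext x; simp
    rw [h2]; exact hPQ.neg
  have hK1 : IsCompactOperator ⇑((compressedOp Q P).comp (compressedOp P Q) - 1) :=
    isCompact_parametrix P Q hP hQ hPQ
  have hK2 : IsCompactOperator ⇑((compressedOp P Q).comp (compressedOp Q P) - 1) :=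
    isCompact_parametrix Q P hQ hP hQP
  refine ⟨?_, hK2, hK1⟩
  have hPc := isClosed_range_of_idem P hP.1
  have hQc := isClosed_range_of_idem Q hQ.1
  haveI : CompleteSpace (LinearMap.range (P : H →ₗ[ℂ] H)) := hPc.completeSpace_coe
  haveI : CompleteSpace (LinearMap.range (Q : H →ₗ[ℂ] H)) := hQc.completeSpace_coe
  set T := compressedOp P Q with hT
  set S := compressedOp Q P with hS
  haveI hker : FiniteDimensional ℂ (LinearMap.ker T.toLinearMap) := auxKerFindim T S hK1
  have hclosed : IsClosed (LinearMap.range T.toLinearMap : Set (LinearMap.range (Q : H →ₗ[ℂ] H))) :=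
    auxRangeClosed T S hK1
  refine ⟨hker, hclosed, ?_⟩
  -- cokernel
  haveI hkerS : FiniteDimensional ℂ (LinearMap.ker S.toLinearMap) := auxKerFindim S T hK2
  have hPsym := hP.2.isSymmetric
  have hQsym := hQ.2.isSymmetric
  have hsub : (LinearMap.range T.toLinearMap)ᗮ ≤ LinearMap.ker S.toLinearMap := by
    intro y hy
    have h0 := (Submodule.mem_orthogonal _ _).mp hy (T (S y)) (LinearMap.mem_range_self _ _)
    -- h0 : ⟪T (S y), y⟫ = 0 in ↥(range Q)
    have h0' : (inner ℂ ((T (S y) : H)) ((y : H)) : ℂ) = 0 := h0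
    have hQy : Q (y : H) = (y : H) := by
      obtain ⟨z, hz⟩ := y.2
      rw [← hz]
      have := ContinuousLinearMap.ext_iff.mp hQ.1 z
      simpa [ContinuousLinearMap.mul_apply] using this
    have hTS : ((T (S y)) : H) = Q (P (y : H)) := rfl
    rw [hTS] at h0'
    have h1 : (inner ℂ (P (y : H)) ((y : H)) : ℂ) = 0 := by
      have hs := hQsym (P (y : H)) (y : H)
      simp only [ContinuousLinearMap.coe_coe] at hs
      rw [hQy] at hs
      rw [← hs]
      exact h0'
    -- now ⟪P y, y⟫ = 0 ; show ⟪P y, P y⟫ = 0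
    have hPPy : P (P (y : H)) = P (y : H) := by
      have := ContinuousLinearMap.ext_iff.mp hP.1 (y : H)
      simpa [ContinuousLinearMap.mul_apply] using this
    have h2 : (inner ℂ (P (y : H)) (P (y : H)) : ℂ) = 0 := by
      have hs := hPsym (P (y : H)) (y : H)
      simp only [ContinuousLinearMap.coe_coe] at hs
      rw [hPPy] at hs
      rw [← hs]
      exact h1
    have h3 : P (y : H) = 0 := inner_self_eq_zero.mp h2
    show S y = 0
    apply Subtype.ext
    show P (y : H) = 0
    exact h3
  haveI : FiniteDimensional ℂ ((LinearMap.range T.toLinearMap)ᗮ : Submodule ℂ (LinearMap.range (Q : H →ₗ[ℂ] H))) :=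
    Submodule.finiteDimensional_of_le hsub
  exact auxCokerFindim (LinearMap.range T.toLinearMap) hclosed
end
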